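/- Let (X,Y) be a BLM pair with parameter θ > 0, and let i, j be positive integers such that E[X^i·Y^j] and all the moments E[X^m] (1 ≤ m ≤ i) and E[Y^m] (1 ≤ m ≤ j) are finite. Then E[X^i·Y^j] = i·j·∑_{k=0}^{i−1} (1/(i−k))·C(i−1,k)·((j+k−1)!/θ^{j+k})·E[X^{i−k}] + i·j·∑_{k=0}^{j−1} (1/(j−k))·C(j−1,k)·((i+k−1)!/θ^{i+k})·E[Y^{j−k}], where C(n,k) denotes the binomial coefficient. -/

import Mathlib

open MeasureTheory Real Set

/-- Marginal survival function `x ↦ P(X > x)`. -/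
def survival {Ω : Type*} [MeasurableSpace Ω] (μ : Measure Ω) (X : Ω → ℝ) (x : ℝ) : ℝ :=
  (μ {ω | x < X ω}).toReal

/-- Joint survival function `(x,y) ↦ P(X > x, Y > y)`. -/
def jointSurvival {Ω : Type*} [MeasurableSpace Ω] (μ : Measure Ω) (X Y : Ω → ℝ) (x y : ℝ) : ℝ :=
  (μ {ω | x < X ω ∧ y < Y ω}).toReal

/-- `(X,Y)` is a BLM pair with parameter `θ > 0`. -/
def IsBLM {Ω : Type*} [MeasurableSpace Ω] (μ : Measure Ω) (X Y : Ω → ℝ) (θ : ℝ) : Prop :=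
  0 < θ ∧ μ {ω | 0 < X ω} = 1 ∧ μ {ω | 0 < Y ω} = 1 ∧
  (∀ x y : ℝ, 0 ≤ y → y ≤ x →
    jointSurvival μ X Y x y = Real.exp (-θ * y) * survival μ X (x - y)) ∧
  (∀ x y : ℝ, 0 ≤ x → x ≤ y →
    jointSurvival μ X Y x y = Real.exp (-θ * x) * survival μ Y (y - x))

open scoped ENNReal

/-- `∫ x in (0,c), n x^(n-1) dx = c^n` in `ℝ≥0∞` form. -/
lemma aux_lint_pow {c : ℝ} (hc : 0 < c) {n : ℕ} (hn : 1 ≤ n) :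
    ∫⁻ x in Set.Ioo (0:ℝ) c, ENNReal.ofReal ((n:ℝ) * x ^ (n-1)) = ENNReal.ofReal (c ^ n) := by
  have hcont : Continuous (fun x : ℝ => (n:ℝ) * x ^ (n-1)) := by continuity
  have hint : IntegrableOn (fun x : ℝ => (n:ℝ) * x ^ (n-1)) (Set.Ioo 0 c) :=
    (hcont.integrableOn_Icc.mono_set Set.Ioo_subset_Icc_self)
  rw [← ofReal_integral_eq_lintegral_ofReal hint ?nn]
  case nn =>
    filter_upwards [ae_restrict_mem measurableSet_Ioo] with x hx
    have : (0:ℝ) ≤ x := le_of_lt hx.1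
    positivity
  congr 1
  have h1 : ∫ x in Set.Ioo (0:ℝ) c, (n:ℝ) * x ^ (n-1)
      = ∫ x in (0:ℝ)..c, (n:ℝ) * x ^ (n-1) := by
    rw [intervalIntegral.integral_of_le hc.le, integral_Ioc_eq_integral_Ioo]
  rw [h1, intervalIntegral.integral_const_mul, integral_pow]
  have h2 : n - 1 + 1 = n := Nat.succ_pred_eq_of_pos hn
  rw [h2]
  have hn0 : (n:ℝ) ≠ 0 := by positivity
  field_simp
  rw [zero_pow (by omega), sub_zero]; push_cast [Nat.cast_sub hn]; ring

/-- `∫ y in (0,∞), y^(n-1) e^{-θ y} dy = (n-1)!/θ^n` in `ℝ≥0∞` form. -/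
lemma aux_gamma_int {θ : ℝ} (hθ : 0 < θ) {n : ℕ} (hn : 1 ≤ n) :
    ∫⁻ y in Set.Ioi (0:ℝ), ENNReal.ofReal (y ^ (n-1) * Real.exp (-θ*y))
      = ENNReal.ofReal ((Nat.factorial (n-1) : ℝ) / θ ^ n) := by
  have hint : IntegrableOn (fun y : ℝ => y ^ (n-1) * Real.exp (-θ*y)) (Set.Ioi 0) := by
    have h := integrableOn_rpow_mul_exp_neg_mul_rpow
      (by exact_mod_cast neg_one_lt_zero.trans_le (by positivity : (0:ℝ) ≤ (n-1:ℕ)) : (-1:ℝ) < ((n-1 : ℕ):ℝ))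
      (zero_lt_one : (0:ℝ) < 1) hθ
    refine (integrableOn_congr_fun ?_ measurableSet_Ioi).mp h
    intro y hy
    simp only [Real.rpow_one, Real.rpow_natCast]
  rw [← ofReal_integral_eq_lintegral_ofReal hint ?nn]
  case nn =>
    filter_upwards [ae_restrict_mem measurableSet_Ioi] with y hy
    have : (0:ℝ) ≤ y := le_of_lt hy
    positivity
  congr 1
  have key := Real.integral_rpow_mul_exp_neg_mul_Ioi
    (a := (n:ℝ)) (r := θ) (by exact_mod_cast Nat.lt_of_lt_of_le Nat.zero_lt_one hn) hθ
  have heq : ∫ y in Set.Ioi (0:ℝ), y ^ (n-1) * Real.exp (-θ*y)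
      = ∫ t in Set.Ioi (0:ℝ), t ^ ((n:ℝ) - 1) * Real.exp (-(θ*t)) := by
    refine setIntegral_congr_fun measurableSet_Ioi (fun y hy => ?_)
    have hy0 : (0:ℝ) < y := hy
    rw [show ((n:ℝ) - 1) = ((n-1 : ℕ):ℝ) by
        push_cast [Nat.cast_sub hn]; ring,
      Real.rpow_natCast]
    ring_nf
  have hcast : ((n:ℝ)) = ((n-1:ℕ):ℝ) + 1 := by
    push_cast [Nat.cast_sub hn]; ring
  rw [heq, key, hcast, Real.Gamma_nat_eq_factorial,
    show (((n-1:ℕ):ℝ) + 1) = ((n:ℝ)) from hcast.symm, Real.rpow_natCast]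
  rw [one_div, inv_pow]
  ring

/-- Weighted layer-cake: `∫ W·Z^n dμ = ∫_{x>0} (∫_{Z>x} W) · n x^{n-1} dx`. -/
lemma aux_layercake {Ω : Type*} [MeasurableSpace Ω] (μ : Measure Ω) [IsFiniteMeasure μ]
    {Z : Ω → ℝ} (hZ : Measurable Z) (hZpos : ∀ᵐ ω ∂μ, 0 < Z ω)
    {W : Ω → ℝ≥0∞} (hW : Measurable W) {n : ℕ} (hn : 1 ≤ n) :
    ∫⁻ ω, W ω * ENNReal.ofReal (Z ω ^ n) ∂μ
      = ∫⁻ x in Set.Ioi (0:ℝ),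
          (∫⁻ ω in {ω | x < Z ω}, W ω ∂μ) * ENNReal.ofReal ((n:ℝ) * x ^ (n-1)) := by
  set f : Ω → ℝ → ℝ≥0∞ := fun ω x =>
    W ω * ({p : Ω × ℝ | 0 < p.2 ∧ p.2 < Z p.1}.indicator
      (fun p => ENNReal.ofReal ((n:ℝ) * p.2 ^ (n-1))) (ω, x)) with hf_def
  have hSmeas : MeasurableSet {p : Ω × ℝ | 0 < p.2 ∧ p.2 < Z p.1} :=
    (measurableSet_lt measurable_const measurable_snd).inter
      (measurableSet_lt measurable_snd (hZ.comp measurable_fst))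
  have hfmeas : Measurable (Function.uncurry f) := by
    apply (hW.comp measurable_fst).mul
    exact Measurable.indicator
      (by fun_prop) hSmeas
  -- step 1: pointwise in ω
  have step1 : ∫⁻ ω, W ω * ENNReal.ofReal (Z ω ^ n) ∂μ = ∫⁻ ω, (∫⁻ x, f ω x) ∂μ := by
    refine lintegral_congr_ae ?_
    filter_upwards [hZpos] with ω hω
    have hfx : ∀ x : ℝ, f ω x
        = (Set.Ioo (0:ℝ) (Z ω)).indicator (fun t => W ω * ENNReal.ofReal ((n:ℝ) * t ^ (n-1))) x := by
      intro x
      simp only [hf_def, Set.indicator_apply, Set.mem_setOf_eq, Set.mem_Ioo]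
      by_cases h : 0 < x ∧ x < Z ω <;> simp [h]
    rw [show (∫⁻ x, f ω x) = _ from lintegral_congr hfx,
      lintegral_indicator measurableSet_Ioo, lintegral_const_mul _ (by fun_prop),
      aux_lint_pow hω hn]
  -- step 2: swap
  have step2 : ∫⁻ ω, (∫⁻ x, f ω x) ∂μ = ∫⁻ x, ∫⁻ ω, f ω x ∂μ :=
    lintegral_lintegral_swap hfmeas.aemeasurable
  -- step 3: pointwise in x
  have step3 : ∀ x : ℝ, ∫⁻ ω, f ω x ∂μ
      = (Set.Ioi (0:ℝ)).indicator
          (fun x => (∫⁻ ω in {ω | x < Z ω}, W ω ∂μ) * ENNReal.ofReal ((n:ℝ) * x ^ (n-1))) x := by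
    intro x
    by_cases hx : 0 < x
    · have : ∀ ω, f ω x = ({ω | x < Z ω}).indicator
          (fun ω => W ω * ENNReal.ofReal ((n:ℝ) * x ^ (n-1))) ω := by
        intro ω
        simp only [hf_def, Set.indicator_apply, Set.mem_setOf_eq, hx, true_and]
        by_cases h : x < Z ω <;> simp [h]
      have hset : MeasurableSet {ω | x < Z ω} := measurableSet_lt measurable_const hZ
      rw [lintegral_congr this, lintegral_indicator hset,
        lintegral_mul_const _ hW, Set.indicator_of_mem (Set.mem_Ioi.mpr hx)]
    · have : ∀ ω, f ω x = 0 := by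
        intro ω
        simp only [hf_def, Set.indicator_apply, Set.mem_setOf_eq]
        simp [hx]
      rw [lintegral_congr this, lintegral_zero, Set.indicator_of_notMem (by simpa using hx)]
  rw [step1, step2, lintegral_congr step3, lintegral_indicator measurableSet_Ioi]

lemma aux_survival_meas {Ω : Type*} [MeasurableSpace Ω] (μ : Measure Ω) (Z : Ω → ℝ) :
    Measurable (fun x : ℝ => μ {ω | x < Z ω}) :=
  Antitone.measurable (fun _ _ hst => measure_mono (fun _ h => lt_of_le_of_lt hst h))

/-- The moment formula: `E[Z^m] = ∫_{x>0} m x^{m-1} P(Z>x) dx` in `ℝ≥0∞` form. -/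
lemma aux_moment {Ω : Type*} [MeasurableSpace Ω] (μ : Measure Ω) [IsFiniteMeasure μ]
    {Z : Ω → ℝ} (hZ : Measurable Z) (hZpos : ∀ᵐ ω ∂μ, 0 < Z ω)
    {m : ℕ} (hm : 1 ≤ m) (hint : Integrable (fun ω => Z ω ^ m) μ) :
    ∫⁻ x in Set.Ioi (0:ℝ), μ {ω | x < Z ω} * ENNReal.ofReal ((m:ℝ) * x ^ (m-1))
      = ENNReal.ofReal (∫ ω, Z ω ^ m ∂μ) := by
  have h1 := aux_layercake μ hZ hZpos (W := fun _ => (1:ENNReal)) measurable_const hm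
  simp only [one_mul, setLIntegral_one] at h1
  rw [← h1, ofReal_integral_eq_lintegral_ofReal hint ?nn]
  case nn => filter_upwards [hZpos] with ω hω; positivity

/-- The core computation: one half of the BLM product-moment formula. -/
lemma aux_core {Ω : Type*} [MeasurableSpace Ω] (μ : Measure Ω) [IsProbabilityMeasure μ]
    {Z : Ω → ℝ} (hZ : Measurable Z) (hZpos : ∀ᵐ ω ∂μ, 0 < Z ω)
    {θ : ℝ} (hθ : 0 < θ) {a b : ℕ} (ha : 1 ≤ a) (hb : 1 ≤ b)
    (hZm : ∀ m : ℕ, 1 ≤ m → m ≤ a → Integrable (fun ω => Z ω ^ m) μ) :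
    (∫⁻ y in Set.Ioi (0:ℝ), ∫⁻ u in Set.Ici (0:ℝ),
        ENNReal.ofReal (Real.exp (-θ*y)) * μ {ω | u < Z ω}
          * ENNReal.ofReal ((a:ℝ) * (u+y)^(a-1)) * ENNReal.ofReal ((b:ℝ) * y^(b-1)))
      = ∑ k ∈ Finset.range a,
          ENNReal.ofReal ((1/((a:ℝ)-(k:ℝ))) * (Nat.choose (a-1) k : ℝ)
            * ((Nat.factorial (b+k-1) : ℝ) / θ^(b+k))
            * ((a:ℝ) * (b:ℝ) * ∫ ω, Z ω ^ (a-k) ∂μ)) := by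
  have hFm := aux_survival_meas μ Z
  have hMk0 : ∀ k : ℕ, 0 ≤ ∫ ω, Z ω ^ (a-k) ∂μ := fun k =>
    integral_nonneg_of_ae (by filter_upwards [hZpos] with ω h; positivity)
  -- inner integral, for fixed y > 0
  have inner : ∀ y ∈ Set.Ioi (0:ℝ),
      (∫⁻ u in Set.Ici (0:ℝ),
        ENNReal.ofReal (Real.exp (-θ*y)) * μ {ω | u < Z ω}
          * ENNReal.ofReal ((a:ℝ) * (u+y)^(a-1)) * ENNReal.ofReal ((b:ℝ) * y^(b-1)))
      = ∑ k ∈ Finset.range a,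
          ENNReal.ofReal (Real.exp (-θ*y) * ((a:ℝ) * (Nat.choose (a-1) k : ℝ) * y^k)
            * ((b:ℝ) * y^(b-1)) * ((1/((a:ℝ)-(k:ℝ))) * ∫ ω, Z ω ^ (a-k) ∂μ)) := by
    intro y hy
    have hy0 : (0:ℝ) < y := hy
    -- expand the binomial inside the integral
    have hsum : ∀ u ∈ Set.Ici (0:ℝ),
        ENNReal.ofReal (Real.exp (-θ*y)) * μ {ω | u < Z ω}
          * ENNReal.ofReal ((a:ℝ) * (u+y)^(a-1)) * ENNReal.ofReal ((b:ℝ) * y^(b-1))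
        = ∑ k ∈ Finset.range a,
            ENNReal.ofReal (Real.exp (-θ*y)) * ENNReal.ofReal ((a:ℝ) * (Nat.choose (a-1) k : ℝ) * y^k)
              * ENNReal.ofReal ((b:ℝ) * y^(b-1))
              * (μ {ω | u < Z ω} * ENNReal.ofReal (u^(a-1-k))) := by
      intro u hu
      have hu0 : (0:ℝ) ≤ u := hu
      have hbin : (u+y)^(a-1) = ∑ k ∈ Finset.range a, y^k * u^(a-1-k) * (Nat.choose (a-1) k : ℝ) := by
        rw [show u + y = y + u by ring, add_pow y u (a-1),
          show a - 1 + 1 = a from by omega]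
      have h1 : ENNReal.ofReal ((a:ℝ) * (u+y)^(a-1))
          = ∑ k ∈ Finset.range a,
              ENNReal.ofReal (((a:ℝ) * (Nat.choose (a-1) k : ℝ) * y^k) * u^(a-1-k)) := by
        rw [hbin, Finset.mul_sum, ENNReal.ofReal_sum_of_nonneg]
        · exact Finset.sum_congr rfl (fun k _ => by ring_nf)
        · intro k _
          positivity
      rw [h1, Finset.mul_sum, Finset.sum_mul]
      refine Finset.sum_congr rfl (fun k hk => ?_)
      rw [ENNReal.ofReal_mul (by positivity : (0:ℝ) ≤ (a:ℝ) * (Nat.choose (a-1) k : ℝ) * y^k)]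
      ring
    rw [setLIntegral_congr_fun measurableSet_Ici hsum,
      lintegral_finset_sum' _ (fun k _ =>
        (((measurable_const.fun_mul measurable_const).fun_mul measurable_const).fun_mul
          (hFm.fun_mul (Measurable.ennreal_ofReal (by fun_prop)))).aemeasurable)]
    refine Finset.sum_congr rfl (fun k hk => ?_)
    have hka : k < a := Finset.mem_range.mp hk
    have hak1 : 1 ≤ a - k := by omega
    have hcast : ((a - k : ℕ) : ℝ) = (a:ℝ) - (k:ℝ) := by
      push_cast [Nat.cast_sub hka.le]; ring
    have hakpos : (0:ℝ) < (a:ℝ) - (k:ℝ) := by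
      rw [← hcast]; exact_mod_cast hak1
    -- pull out constants, change Ici to Ioi, rescale, apply the moment formula
    rw [lintegral_const_mul _ (hFm.fun_mul (by fun_prop))]
    have hIoi : ∫⁻ u in Set.Ici (0:ℝ), μ {ω | u < Z ω} * ENNReal.ofReal (u^(a-1-k))
        = ∫⁻ u in Set.Ioi (0:ℝ), μ {ω | u < Z ω} * ENNReal.ofReal (u^(a-1-k)) :=
      (setLIntegral_congr (Ioi_ae_eq_Ici (a := (0:ℝ)))).symm
    have hres : ∀ u ∈ Set.Ioi (0:ℝ),
        μ {ω | u < Z ω} * ENNReal.ofReal (u^(a-1-k))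
        = ENNReal.ofReal (1/((a:ℝ)-(k:ℝ)))
            * (μ {ω | u < Z ω} * ENNReal.ofReal (((a-k:ℕ):ℝ) * u^(a-k-1))) := by
      intro u hu
      have hu0 : (0:ℝ) < u := hu
      have : (u:ℝ)^(a-1-k) = (1/((a:ℝ)-(k:ℝ))) * (((a-k:ℕ):ℝ) * u^(a-k-1)) := by
        rw [hcast, show a-1-k = a-k-1 from by omega]
        field_simp
      rw [this, ENNReal.ofReal_mul (by positivity), ENNReal.ofReal_mul (by positivity)]
      ring
    rw [hIoi, setLIntegral_congr_fun measurableSet_Ioi hres,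
      lintegral_const_mul _ (hFm.fun_mul (by fun_prop)),
      aux_moment μ hZ hZpos hak1 (hZm (a-k) hak1 (by omega))]
    rw [← ENNReal.ofReal_mul (by positivity),
      ← ENNReal.ofReal_mul (by positivity),
      ← ENNReal.ofReal_mul (by positivity),
      ← ENNReal.ofReal_mul (by positivity)]
  -- now the outer integral
  rw [setLIntegral_congr_fun measurableSet_Ioi inner,
    lintegral_finset_sum' _ (fun k _ =>
      (Measurable.ennreal_ofReal (by fun_prop)).aemeasurable)]
  refine Finset.sum_congr rfl (fun k hk => ?_)
  have hka : k < a := Finset.mem_range.mp hk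
  set Mk : ℝ := ∫ ω, Z ω ^ (a-k) ∂μ with hMk
  have hbk : 1 ≤ b + k := by omega
  have hc2 : (0:ℝ) ≤ ((a:ℝ) * (Nat.choose (a-1) k : ℝ)) * ((b:ℝ))
      * ((1/((a:ℝ)-(k:ℝ))) * Mk) := by
    have h1 : (0:ℝ) ≤ 1/((a:ℝ)-(k:ℝ)) := by
      have : (0:ℝ) < (a:ℝ)-(k:ℝ) := by
        have : (k:ℝ) < (a:ℝ) := by exact_mod_cast hka
        linarith
      positivity
    have := hMk0 k
    positivity
  have hpt : ∀ y ∈ Set.Ioi (0:ℝ),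
      ENNReal.ofReal (Real.exp (-θ*y) * ((a:ℝ) * (Nat.choose (a-1) k : ℝ) * y^k)
        * ((b:ℝ) * y^(b-1)) * ((1/((a:ℝ)-(k:ℝ))) * Mk))
      = ENNReal.ofReal (((a:ℝ) * (Nat.choose (a-1) k : ℝ)) * ((b:ℝ))
          * ((1/((a:ℝ)-(k:ℝ))) * Mk))
        * ENNReal.ofReal (y^(b+k-1) * Real.exp (-θ*y)) := by
    intro y hy
    have hy0 : (0:ℝ) < y := hy
    rw [← ENNReal.ofReal_mul hc2]
    congr 1
    have hyp : y^(b+k-1) = y^(b-1) * y^k := by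
      rw [← pow_add, show b - 1 + k = b + k - 1 from by omega]
    rw [hyp]; ring
  rw [setLIntegral_congr_fun measurableSet_Ioi hpt,
    lintegral_const_mul _ (by fun_prop), aux_gamma_int hθ hbk,
    ← ENNReal.ofReal_mul hc2]
  congr 1
  ring

/-- Translation for set lintegrals on `Ici`. -/
lemma aux_shift_Ici (f : ℝ → ENNReal) (y : ℝ) :
    ∫⁻ x in Set.Ici y, f x = ∫⁻ u in Set.Ici (0:ℝ), f (u + y) := by
  have h := (measurePreserving_add_right volume y).setLIntegral_comp_preimage_emb
    (measurableEmbedding_addRight y) f (Set.Ici y)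
  have hpre : (fun a : ℝ => a + y) ⁻¹' (Set.Ici y) = Set.Ici 0 := by
    ext u; simp [le_add_iff_nonneg_left]
  rw [hpre] at h
  exact h.symm

/-- Translation for set lintegrals on `Ioi`. -/
lemma aux_shift_Ioi (f : ℝ → ENNReal) (y : ℝ) :
    ∫⁻ x in Set.Ioi y, f x = ∫⁻ u in Set.Ioi (0:ℝ), f (u + y) := by
  have h := (measurePreserving_add_right volume y).setLIntegral_comp_preimage_emb
    (measurableEmbedding_addRight y) f (Set.Ioi y)
  have hpre : (fun a : ℝ => a + y) ⁻¹' (Set.Ioi y) = Set.Ioi 0 := by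
    ext u; simp [lt_add_iff_pos_left]
  rw [hpre] at h
  exact h.symm

/-- Split the first quadrant along the diagonal, swapping order on the lower part. -/
lemma aux_split (g : ℝ → ℝ → ENNReal) (hg : Measurable (Function.uncurry g)) :
    ∫⁻ x in Set.Ioi (0:ℝ), ∫⁻ y in Set.Ioi (0:ℝ), g x y
      = (∫⁻ y in Set.Ioi (0:ℝ), ∫⁻ x in Set.Ici y, g x y)
        + (∫⁻ x in Set.Ioi (0:ℝ), ∫⁻ y in Set.Ioi x, g x y) := by
  classical
  set g1 : ℝ → ℝ → ENNReal := fun x y =>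
    ({p : ℝ × ℝ | 0 < p.2 ∧ p.2 ≤ p.1}.indicator (Function.uncurry g)) (x, y) with hg1
  set g2 : ℝ → ℝ → ENNReal := fun x y =>
    ({p : ℝ × ℝ | 0 < p.1 ∧ p.1 < p.2}.indicator (Function.uncurry g)) (x, y) with hg2
  have hs1 : MeasurableSet {p : ℝ × ℝ | 0 < p.2 ∧ p.2 ≤ p.1} :=
    (measurableSet_lt measurable_const measurable_snd).inter
      (measurableSet_le measurable_snd measurable_fst)
  have hs2 : MeasurableSet {p : ℝ × ℝ | 0 < p.1 ∧ p.1 < p.2} :=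
    (measurableSet_lt measurable_const measurable_fst).inter
      (measurableSet_lt measurable_fst measurable_snd)
  have hm1 : Measurable (Function.uncurry g1) := hg.indicator hs1
  have hm2 : Measurable (Function.uncurry g2) := hg.indicator hs2
  -- step 1: LHS = iterated integral of g1 + g2 over all of ℝ²
  have step1 : ∫⁻ x in Set.Ioi (0:ℝ), ∫⁻ y in Set.Ioi (0:ℝ), g x y
      = ∫⁻ x : ℝ, (∫⁻ y : ℝ, g1 x y) + ∫⁻ y : ℝ, g2 x y := by
    rw [← lintegral_indicator measurableSet_Ioi]
    refine lintegral_congr (fun x => ?_)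
    by_cases hx : 0 < x
    · rw [Set.indicator_of_mem (Set.mem_Ioi.mpr hx),
        ← lintegral_add_left (Measurable.of_uncurry_left hm1)]
      rw [← lintegral_indicator measurableSet_Ioi]
      refine lintegral_congr (fun y => ?_)
      by_cases hy : 0 < y
      · rw [Set.indicator_of_mem (Set.mem_Ioi.mpr hy)]
        by_cases hxy : y ≤ x
        · simp only [hg1, hg2, Set.indicator_apply, Set.mem_setOf_eq]
          simp [hy, hxy, not_lt.mpr hxy, Function.uncurry]
        · simp only [hg1, hg2, Set.indicator_apply, Set.mem_setOf_eq]
          simp [hy, hxy, hx, lt_of_not_ge hxy, Function.uncurry]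
      · rw [Set.indicator_of_notMem (by simpa using hy)]
        simp only [hg1, hg2, Set.indicator_apply, Set.mem_setOf_eq]
        have h2 : ¬ (0 < x ∧ x < y) := by
          rintro ⟨h, h'⟩; exact hy (lt_trans h h')
        simp [hy, h2]
    · rw [Set.indicator_of_notMem (by simpa using hx)]
      have hz1 : ∀ y : ℝ, g1 x y = 0 := by
        intro y
        simp only [hg1, Set.indicator_apply, Set.mem_setOf_eq]
        have : ¬ (0 < y ∧ y ≤ x) := by
          rintro ⟨h, h'⟩; exact hx (lt_of_lt_of_le h h')
        simp [this]
      have hz2 : ∀ y : ℝ, g2 x y = 0 := by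
        intro y
        simp only [hg2, Set.indicator_apply, Set.mem_setOf_eq]
        simp [hx]
      simp [lintegral_congr hz1, lintegral_congr hz2]
  -- step 2: swap the g1 part and identify regions
  have step2 : ∫⁻ x : ℝ, (∫⁻ y : ℝ, g1 x y)
      = ∫⁻ y in Set.Ioi (0:ℝ), ∫⁻ x in Set.Ici y, g x y := by
    rw [lintegral_lintegral_swap hm1.aemeasurable, ← lintegral_indicator measurableSet_Ioi]
    refine lintegral_congr (fun y => ?_)
    by_cases hy : 0 < y
    · rw [Set.indicator_of_mem (Set.mem_Ioi.mpr hy), ← lintegral_indicator measurableSet_Ici]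
      refine lintegral_congr (fun x => ?_)
      simp only [hg1, Set.indicator_apply, Set.mem_setOf_eq, Set.mem_Ici]
      by_cases hxy : y ≤ x <;> simp [hxy, hy, Function.uncurry]
    · rw [Set.indicator_of_notMem (by simpa using hy)]
      refine (lintegral_congr (fun x => ?_)).trans lintegral_zero
      simp only [hg1, Set.indicator_apply, Set.mem_setOf_eq]
      simp [hy]
  have step3 : ∫⁻ x : ℝ, (∫⁻ y : ℝ, g2 x y)
      = ∫⁻ x in Set.Ioi (0:ℝ), ∫⁻ y in Set.Ioi x, g x y := by
    rw [← lintegral_indicator measurableSet_Ioi]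
    refine lintegral_congr (fun x => ?_)
    by_cases hx : 0 < x
    · rw [Set.indicator_of_mem (Set.mem_Ioi.mpr hx), ← lintegral_indicator measurableSet_Ioi]
      refine lintegral_congr (fun y => ?_)
      simp only [hg2, Set.indicator_apply, Set.mem_setOf_eq, Set.mem_Ioi]
      by_cases hxy : x < y <;> simp [hxy, hx, Function.uncurry]
    · rw [Set.indicator_of_notMem (by simpa using hx)]
      refine (lintegral_congr (fun y => ?_)).trans lintegral_zero
      simp only [hg2, Set.indicator_apply, Set.mem_setOf_eq]
      simp [hx]
  rw [step1, lintegral_add_left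
    (show Measurable fun x : ℝ => ∫⁻ y, g1 x y from hm1.lintegral_prod_right'),
    step2, step3]

theorem blm_product_moments {Ω : Type*} [MeasurableSpace Ω] (μ : Measure Ω)
    [IsProbabilityMeasure μ] (X Y : Ω → ℝ) (hX : Measurable X) (hY : Measurable Y)
    (θ : ℝ) (hBLM : IsBLM μ X Y θ) (i j : ℕ) (hi : 1 ≤ i) (hj : 1 ≤ j)
    (hXY : Integrable (fun ω => X ω ^ i * Y ω ^ j) μ)
    (hXm : ∀ m : ℕ, 1 ≤ m → m ≤ i → Integrable (fun ω => X ω ^ m) μ)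
    (hYm : ∀ m : ℕ, 1 ≤ m → m ≤ j → Integrable (fun ω => Y ω ^ m) μ) :
    ∫ ω, X ω ^ i * Y ω ^ j ∂μ =
      (i : ℝ) * (j : ℝ) * ∑ k ∈ Finset.range i,
          (1 / ((i : ℝ) - (k : ℝ))) * (Nat.choose (i - 1) k : ℝ)
            * ((Nat.factorial (j + k - 1) : ℝ) / θ ^ (j + k))
            * ∫ ω, X ω ^ (i - k) ∂μ
        + (i : ℝ) * (j : ℝ) * ∑ k ∈ Finset.range j,
            (1 / ((j : ℝ) - (k : ℝ))) * (Nat.choose (j - 1) k : ℝ)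
              * ((Nat.factorial (i + k - 1) : ℝ) / θ ^ (i + k))
              * ∫ ω, Y ω ^ (j - k) ∂μ := by
  obtain ⟨hθ, hX1, hY1, hB1, hB2⟩ := hBLM
  have hXmeas : MeasurableSet {ω | 0 < X ω} := measurableSet_lt measurable_const hX
  have hYmeas : MeasurableSet {ω | 0 < Y ω} := measurableSet_lt measurable_const hY
  have hXpos : ∀ᵐ ω ∂μ, 0 < X ω := by
    rw [ae_iff, show {ω | ¬ 0 < X ω} = {ω | 0 < X ω}ᶜ from rfl,
      measure_compl hXmeas (measure_ne_top μ _), hX1, measure_univ, tsub_self]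
  have hYpos : ∀ᵐ ω ∂μ, 0 < Y ω := by
    rw [ae_iff, show {ω | ¬ 0 < Y ω} = {ω | 0 < Y ω}ᶜ from rfl,
      measure_compl hYmeas (measure_ne_top μ _), hY1, measure_univ, tsub_self]
  set S : ℝ → ℝ → ENNReal := fun x y => μ {ω | x < X ω ∧ y < Y ω} with hSdef
  have hSy : ∀ x, Measurable fun y => S x y := fun x =>
    Antitone.measurable (fun y y' h => measure_mono (fun ω hω => ⟨hω.1, lt_of_le_of_lt h hω.2⟩))
  have hSp : Measurable fun p : ℝ × ℝ => S p.1 p.2 := by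
    have hset : MeasurableSet {q : (ℝ × ℝ) × Ω | q.1.1 < X q.2 ∧ q.1.2 < Y q.2} :=
      (measurableSet_lt (measurable_fst.fst) (hX.comp measurable_snd)).inter
        (measurableSet_lt (measurable_fst.snd) (hY.comp measurable_snd))
    exact measurable_measure_prodMk_left hset
  set g : ℝ → ℝ → ENNReal := fun x y =>
    S x y * ENNReal.ofReal ((j:ℝ) * y ^ (j-1)) * ENNReal.ofReal ((i:ℝ) * x ^ (i-1)) with hgdef
  have hguc : Measurable (Function.uncurry g) := by
    apply Measurable.mul
    apply Measurable.mul
    · exact hSp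
    · exact Measurable.ennreal_ofReal (by fun_prop : Measurable fun p : ℝ × ℝ => (j:ℝ) * p.2 ^ (j-1))
    · exact Measurable.ennreal_ofReal (by fun_prop : Measurable fun p : ℝ × ℝ => (i:ℝ) * p.1 ^ (i-1))
  -- bivariate layer cake
  have hD : ∫⁻ ω, ENNReal.ofReal (X ω ^ i * Y ω ^ j) ∂μ
      = ∫⁻ x in Set.Ioi (0:ℝ), ∫⁻ y in Set.Ioi (0:ℝ), g x y := by
    have h1 : ∫⁻ ω, ENNReal.ofReal (X ω ^ i * Y ω ^ j) ∂μ
        = ∫⁻ ω, (fun ω => ENNReal.ofReal (Y ω ^ j)) ω * ENNReal.ofReal (X ω ^ i) ∂μ := by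
      refine lintegral_congr_ae ?_
      filter_upwards [hXpos, hYpos] with ω h1 h2
      rw [← ENNReal.ofReal_mul (by positivity)]
      congr 1; ring
    rw [h1, aux_layercake μ hX hXpos (Measurable.ennreal_ofReal (hY.pow_const j)) hi]
    refine setLIntegral_congr_fun measurableSet_Ioi (fun x hx => ?_)
    have h2 : ∫⁻ ω in {ω | x < X ω}, ENNReal.ofReal (Y ω ^ j) ∂μ
        = ∫⁻ y in Set.Ioi (0:ℝ), S x y * ENNReal.ofReal ((j:ℝ) * y ^ (j-1)) := by
      have h3 := aux_layercake (μ.restrict {ω | x < X ω}) hY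
        (ae_restrict_of_ae hYpos) (W := fun _ => (1:ENNReal)) measurable_const hj
      simp only [one_mul, setLIntegral_one] at h3
      rw [h3]
      refine setLIntegral_congr_fun measurableSet_Ioi (fun y hy => ?_)
      have h4 : (μ.restrict {ω | x < X ω}) {ω | y < Y ω} = S x y := by
        rw [Measure.restrict_apply (measurableSet_lt measurable_const hY), hSdef]
        congr 1
        ext ω
        simp only [Set.mem_inter_iff, Set.mem_setOf_eq]
        tauto
      rw [h4]
    rw [h2, ← lintegral_mul_const _ ((hSy x).fun_mul (Measurable.ennreal_ofReal (by fun_prop)))]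
  -- split into the two regions
  have hsplit := aux_split g hguc
  -- lower region: apply BLM and reduce to aux_core (Z = X)
  have hT1 : ∫⁻ y in Set.Ioi (0:ℝ), ∫⁻ x in Set.Ici y, g x y
      = ∫⁻ y in Set.Ioi (0:ℝ), ∫⁻ u in Set.Ici (0:ℝ),
          ENNReal.ofReal (Real.exp (-θ*y)) * μ {ω | u < X ω}
            * ENNReal.ofReal ((i:ℝ) * (u+y) ^ (i-1)) * ENNReal.ofReal ((j:ℝ) * y ^ (j-1)) := by
    refine setLIntegral_congr_fun measurableSet_Ioi (fun y hy => ?_)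
    have hy0 : (0:ℝ) < y := hy
    rw [aux_shift_Ici (fun x => g x y) y]
    refine setLIntegral_congr_fun measurableSet_Ici (fun u hu => ?_)
    have hu0 : (0:ℝ) ≤ u := hu
    have hblm := hB1 (u+y) y hy0.le (by linarith)
    have hxy : u + y - y = u := by ring
    rw [hxy] at hblm
    have hSval : S (u+y) y = ENNReal.ofReal (Real.exp (-θ*y)) * μ {ω | u < X ω} := by
      have h1 : S (u+y) y = ENNReal.ofReal (jointSurvival μ X Y (u+y) y) := by
        rw [hSdef, jointSurvival, ENNReal.ofReal_toReal (measure_ne_top μ _)]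
      rw [h1, hblm, ENNReal.ofReal_mul (Real.exp_nonneg _), survival,
        ENNReal.ofReal_toReal (measure_ne_top μ _)]
    rw [hgdef]
    simp only []
    rw [hSval]
    try ring
  -- upper region: apply BLM and reduce to aux_core (Z = Y)
  have hT2 : ∫⁻ x in Set.Ioi (0:ℝ), ∫⁻ y in Set.Ioi x, g x y
      = ∫⁻ x in Set.Ioi (0:ℝ), ∫⁻ v in Set.Ici (0:ℝ),
          ENNReal.ofReal (Real.exp (-θ*x)) * μ {ω | v < Y ω}
            * ENNReal.ofReal ((j:ℝ) * (v+x) ^ (j-1)) * ENNReal.ofReal ((i:ℝ) * x ^ (i-1)) := by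
    refine setLIntegral_congr_fun measurableSet_Ioi (fun x hx => ?_)
    have hx0 : (0:ℝ) < x := hx
    rw [aux_shift_Ioi (fun y => g x y) x,
      show (∫⁻ v in Set.Ioi (0:ℝ), g x (v+x)) = ∫⁻ v in Set.Ici (0:ℝ), g x (v+x) from
        setLIntegral_congr Ioi_ae_eq_Ici]
    refine setLIntegral_congr_fun measurableSet_Ici (fun v hv => ?_)
    have hv0 : (0:ℝ) ≤ v := hv
    have hblm := hB2 x (v+x) hx0.le (by linarith)
    have hxy : v + x - x = v := by ring
    rw [hxy] at hblm
    have hSval : S x (v+x) = ENNReal.ofReal (Real.exp (-θ*x)) * μ {ω | v < Y ω} := by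
      have h1 : S x (v+x) = ENNReal.ofReal (jointSurvival μ X Y x (v+x)) := by
        rw [hSdef, jointSurvival, ENNReal.ofReal_toReal (measure_ne_top μ _)]
      rw [h1, hblm, ENNReal.ofReal_mul (Real.exp_nonneg _), survival,
        ENNReal.ofReal_toReal (measure_ne_top μ _)]
    rw [hgdef]
    simp only []
    rw [hSval]
    try ring
  have hC1 := aux_core μ hX hXpos hθ hi hj hXm
  have hC2 := aux_core μ hY hYpos hθ hj hi hYm
  have hInt : ∫⁻ ω, ENNReal.ofReal (X ω ^ i * Y ω ^ j) ∂μ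
      = (∑ k ∈ Finset.range i,
          ENNReal.ofReal ((1/((i:ℝ)-(k:ℝ))) * (Nat.choose (i-1) k : ℝ)
            * ((Nat.factorial (j+k-1) : ℝ) / θ^(j+k))
            * ((i:ℝ) * (j:ℝ) * ∫ ω, X ω ^ (i-k) ∂μ)))
        + (∑ k ∈ Finset.range j,
          ENNReal.ofReal ((1/((j:ℝ)-(k:ℝ))) * (Nat.choose (j-1) k : ℝ)
            * ((Nat.factorial (i+k-1) : ℝ) / θ^(i+k))
            * ((j:ℝ) * (i:ℝ) * ∫ ω, Y ω ^ (j-k) ∂μ))) := by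
    rw [hD, hsplit, hT1, hT2, hC1, hC2]
  -- nonnegativity of the coefficients
  have hMX : ∀ k : ℕ, 0 ≤ ∫ ω, X ω ^ (i-k) ∂μ := fun k =>
    integral_nonneg_of_ae (by filter_upwards [hXpos] with ω h; positivity)
  have hMY : ∀ k : ℕ, 0 ≤ ∫ ω, Y ω ^ (j-k) ∂μ := fun k =>
    integral_nonneg_of_ae (by filter_upwards [hYpos] with ω h; positivity)
  have hcoefX : ∀ k ∈ Finset.range i,
      0 ≤ (1/((i:ℝ)-(k:ℝ))) * (Nat.choose (i-1) k : ℝ)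
        * ((Nat.factorial (j+k-1) : ℝ) / θ^(j+k)) * ((i:ℝ) * (j:ℝ) * ∫ ω, X ω ^ (i-k) ∂μ) := by
    intro k hk
    have hka : (k:ℝ) < (i:ℝ) := by exact_mod_cast Finset.mem_range.mp hk
    have h1 : (0:ℝ) < (i:ℝ) - (k:ℝ) := by linarith
    have := hMX k
    positivity
  have hcoefY : ∀ k ∈ Finset.range j,
      0 ≤ (1/((j:ℝ)-(k:ℝ))) * (Nat.choose (j-1) k : ℝ)
        * ((Nat.factorial (i+k-1) : ℝ) / θ^(i+k)) * ((j:ℝ) * (i:ℝ) * ∫ ω, Y ω ^ (j-k) ∂μ) := by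
    intro k hk
    have hka : (k:ℝ) < (j:ℝ) := by exact_mod_cast Finset.mem_range.mp hk
    have h1 : (0:ℝ) < (j:ℝ) - (k:ℝ) := by linarith
    have := hMY k
    positivity
  -- convert the Bochner integral
  rw [integral_eq_lintegral_of_nonneg_ae
      (by filter_upwards [hXpos, hYpos] with ω h1 h2; positivity)
      (((hX.pow_const i).fun_mul (hY.pow_const j)).aestronglyMeasurable),
    hInt, ENNReal.toReal_add (by simp [ENNReal.sum_eq_top]) (by simp [ENNReal.sum_eq_top]),
    ENNReal.toReal_sum (fun k _ => ENNReal.ofReal_ne_top),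
    ENNReal.toReal_sum (fun k _ => ENNReal.ofReal_ne_top)]
  rw [Finset.mul_sum, Finset.mul_sum]
  congr 1
  · refine Finset.sum_congr rfl (fun k hk => ?_)
    rw [ENNReal.toReal_ofReal (hcoefX k hk)]
    ring
  · refine Finset.sum_congr rfl (fun k hk => ?_)
    rw [ENNReal.toReal_ofReal (hcoefY k hk)]
    ring
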